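/- Let (V,q) be a finite-dimensional nondegenerate quadratic space over a field F and U ⊆ V a totally isotropic subspace. Then the filtration W^U on Clif(V,q) restricts on ι(V) to the filtration W^U on V: for every integer k, ι(V) ∩ W^U_k Clif(V) = ι(W^U_k V). In particular ι(V) ∩ W^U_{−1}Clif(V) = ι(U) and ι(V) ∩ W^U_0 Clif(V) = ι(U^⊥). -/

import Mathlib

open CliffordAlgebra QuadraticMap

noncomputable section

variable {F V : Type*} [Field F] [AddCommGroup V] [Module F V]
variable (Q : QuadraticForm F V) (U : Submodule F V)

/-- The filtration `W^U` on `V`: `W_k = 0` for `k < -1`, `W_{-1} = U`, `W_0 = U^⊥`,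
`W_k = V` for `k ≥ 1`. -/
def filtV (k : ℤ) : Submodule F V :=
  if k < -1 then ⊥
  else if k = -1 then U
  else if k = 0 then LinearMap.BilinForm.orthogonal (QuadraticMap.polarBilin Q) U
  else ⊤

/-- The induced filtration `W^U` on the Clifford algebra: `W_k Clif(V)` is the span of the
products `ι(x₁)⋯ι(x_r)` with `x_i ∈ W_{α_i} V` and `α₁ + ⋯ + α_r ≤ k`. -/
def filtC (k : ℤ) : Submodule F (CliffordAlgebra Q) :=
  Submodule.span F
    {z | ∃ (r : ℕ) (f : Fin r → V) (α : Fin r → ℤ),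
      (∀ i, f i ∈ filtV Q U (α i)) ∧ (∑ i, α i) ≤ k ∧
      z = (List.ofFn fun i => CliffordAlgebra.ι Q (f i)).prod}

end


theorem aux_iota_injective {F W : Type*} [Field F] [AddCommGroup W] [Module F W]
    (Qw : QuadraticForm F W) : Function.Injective (CliffordAlgebra.ι Qw) := by
  obtain ⟨B, hB⟩ := LinearMap.BilinMap.toQuadraticMap_surjective
    ((0 : QuadraticForm F W) - Qw)
  intro x y hxy
  have h2 : CliffordAlgebra.changeForm hB (CliffordAlgebra.ι Qw x)
      = CliffordAlgebra.changeForm hB (CliffordAlgebra.ι Qw y) := by rw [hxy]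
  rw [CliffordAlgebra.changeForm_ι, CliffordAlgebra.changeForm_ι] at h2
  exact ExteriorAlgebra.ι_leftInverse.injective h2

theorem aux_tri {R : Type*} [Ring R] (a b c : R)
    (ha : a * a = 0) (hc : c * c = 0) (hab : a * b + b * a = 0) (hbc : b * c + c * b = 0) :
    (AddMonoidAlgebra.single (-1 : ℤ) a + AddMonoidAlgebra.single 0 b + AddMonoidAlgebra.single 1 c :
        AddMonoidAlgebra R ℤ) *
      (AddMonoidAlgebra.single (-1 : ℤ) a + AddMonoidAlgebra.single 0 b + AddMonoidAlgebra.single 1 c :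
        AddMonoidAlgebra R ℤ)
      = AddMonoidAlgebra.single (0 : ℤ) (b * b + (a * c + c * a)) := by
  have hba : b * a = -(a * b) := eq_neg_of_add_eq_zero_right hab
  have hcb : c * b = -(b * c) := eq_neg_of_add_eq_zero_right hbc
  simp only [add_mul, mul_add, AddMonoidAlgebra.single_mul_single]
  norm_num [ha, hc, hba, hcb, AddMonoidAlgebra.single_neg, AddMonoidAlgebra.single_add]
  abel

theorem aux_rev {F V : Type*} [Field F] [AddCommGroup V] [Module F V]
    (Q : QuadraticForm F V) (U : Submodule F V) (k : ℤ) (v : V)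
    (hv : v ∈ filtV Q U k) : CliffordAlgebra.ι Q v ∈ filtC Q U k := by
  apply Submodule.subset_span
  refine ⟨1, fun _ => v, fun _ => k, fun _ => hv, by simp, ?_⟩
  simp

set_option maxHeartbeats 2000000 in
theorem aux_key {F V : Type*} [Field F] [AddCommGroup V] [Module F V]
    (Q : QuadraticForm F V) (U : Submodule F V) (hU : ∀ u ∈ U, Q u = 0)
    (k : ℤ) (v : V) (hv : CliffordAlgebra.ι Q v ∈ filtC Q U k) : v ∈ filtV Q U k := by
  classical
  obtain ⟨C, hC⟩ := Submodule.exists_isCompl U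
  set pU : V →ₗ[F] V := U.subtype ∘ₗ U.projectionOnto C hC with hpUdef
  set pC : V →ₗ[F] V := C.subtype ∘ₗ C.projectionOnto U hC.symm with hpCdef
  have hpUmem : ∀ x, pU x ∈ U := fun x => (U.projectionOnto C hC x).2
  have hsum : ∀ x : V, pU x + pC x = x := fun x =>
    Submodule.projection_add_projection_eq_self hC x
  have hpU_left : ∀ x ∈ U, pU x = x := by
    intro x hx
    have h := Submodule.projectionOnto_apply_left hC ⟨x, hx⟩
    exact congrArg U.subtype h
  have hpC_right : ∀ x ∈ U, pC x = 0 := by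
    intro x hx
    have h := Submodule.projectionOnto_apply_of_mem_right hC.symm hx
    simp [hpCdef, h]
  have hpCmem : ∀ x, pC x ∈ C := fun x => (C.projectionOnto U hC.symm x).2
  have hpUpC : ∀ x, pU (pC x) = 0 := by
    intro x
    have h := Submodule.projectionOnto_apply_of_mem_right hC (hpCmem x)
    simp [hpUdef, h]
  have hpUpU : ∀ x, pU (pU x) = pU x := fun x => hpU_left _ (hpUmem x)
  have hpCpU : ∀ x, pC (pU x) = 0 := fun x => hpC_right _ (hpUmem x)
  -- isotropy of U for the polar form
  have hUU : ∀ a ∈ U, ∀ b ∈ U, polar Q a b = 0 := by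
    intro a ha b hb
    have h0 : Q (a + b) = 0 := hU _ (add_mem ha hb)
    simp [QuadraticMap.polar, h0, hU a ha, hU b hb]
  -- the extended quadratic space on V × V*
  set Bp : LinearMap.BilinMap F (V × Module.Dual F V) F :=
    LinearMap.compl₁₂ (LinearMap.id (R := F) (M := Module.Dual F V))
      (LinearMap.snd F V (Module.Dual F V)) (LinearMap.fst F V (Module.Dual F V)) with hBpdef
  set Qt : QuadraticForm F (V × Module.Dual F V) :=
    Q.comp (LinearMap.fst F V (Module.Dual F V)) + Bp.toQuadraticMap with hQtdef
  have hQt : ∀ x : V × Module.Dual F V, Qt x = Q x.1 + x.2 x.1 := by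
    intro x
    simp [hQtdef, hBpdef, QuadraticMap.comp_apply, LinearMap.BilinMap.toQuadraticMap_apply]
  have hBt : ∀ x y : V × Module.Dual F V,
      polar Qt x y = polar Q x.1 y.1 + x.2 y.1 + y.2 x.1 := by
    intro x y
    simp only [QuadraticMap.polar, hQt, Prod.fst_add, Prod.snd_add, map_add,
      LinearMap.add_apply]
    ring
  -- the three component maps
  set Mm : V →ₗ[F] Module.Dual F V :=
    ((QuadraticMap.polarBilin Q ∘ₗ pU).flip) ∘ₗ pC with hMmdef
  have hMm : ∀ x w : V, Mm x w = polar Q (pU w) (pC x) := by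
    intro x w
    simp [hMmdef, LinearMap.flip_apply]
  set jm : V →ₗ[F] V × Module.Dual F V :=
    (LinearMap.inl F V (Module.Dual F V)) ∘ₗ pU with hjmdef
  set j0 : V →ₗ[F] V × Module.Dual F V := LinearMap.prod pC (-Mm) with hj0def
  set jp : V →ₗ[F] V × Module.Dual F V :=
    LinearMap.prod (0 : V →ₗ[F] V) Mm with hjpdef
  have hjm : ∀ x, jm x = (pU x, 0) := fun x => rfl
  have hj0 : ∀ x, j0 x = (pC x, -(Mm x)) := fun x => rfl
  have hjp : ∀ x, jp x = (0, Mm x) := fun x => rfl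
  -- the five identities
  have h1 : ∀ x, Qt (jm x) = 0 := by
    intro x
    rw [hjm, hQt]
    simp [hU _ (hpUmem x)]
  have h2 : ∀ x, Qt (jp x) = 0 := by
    intro x
    rw [hjp, hQt]
    simp
  have h3 : ∀ x, polar Qt (jm x) (j0 x) = 0 := by
    intro x
    rw [hjm, hj0, hBt]
    simp only [LinearMap.neg_apply, hMm, hpUpU]
    simp
  have h4 : ∀ x, polar Qt (j0 x) (jp x) = 0 := by
    intro x
    rw [hj0, hjp, hBt]
    simp only [LinearMap.neg_apply, hMm, hpUpC]
    simp [QuadraticMap.polar_zero_right]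
  have h5 : ∀ x, Qt (j0 x) + polar Qt (jm x) (jp x) = Q x := by
    intro x
    rw [hj0, hjp, hQt, hBt]
    simp only [LinearMap.neg_apply, LinearMap.zero_apply, hMm, hpUpC, hpUpU]
    have hx : Q x = Q (pU x) + Q (pC x) + polar Q (pU x) (pC x) := by
      conv_lhs => rw [← hsum x]
      simp [QuadraticMap.polar]
    rw [hx, hU _ (hpUmem x)]
    simp only [hjm, hpUpU, QuadraticMap.polar_zero_right, QuadraticMap.polar_zero_left,
      LinearMap.zero_apply]
    ring
  -- the Laurent-type algebra and the grading morphism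
  set A := AddMonoidAlgebra (CliffordAlgebra Qt) ℤ with hAdef
  set φ : V →ₗ[F] A :=
    (AddMonoidAlgebra.lsingle (-1)) ∘ₗ ((CliffordAlgebra.ι Qt) ∘ₗ jm)
      + (AddMonoidAlgebra.lsingle 0) ∘ₗ ((CliffordAlgebra.ι Qt) ∘ₗ j0)
      + (AddMonoidAlgebra.lsingle 1) ∘ₗ ((CliffordAlgebra.ι Qt) ∘ₗ jp) with hφdef
  have hφapp : ∀ x, φ x = AddMonoidAlgebra.single (-1) (CliffordAlgebra.ι Qt (jm x))
      + AddMonoidAlgebra.single 0 (CliffordAlgebra.ι Qt (j0 x))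
      + AddMonoidAlgebra.single 1 (CliffordAlgebra.ι Qt (jp x)) := fun x => rfl
  have halg : ∀ r : F, algebraMap F A r
      = AddMonoidAlgebra.single (0 : ℤ) (algebraMap F (CliffordAlgebra Qt) r) := by
    intro r
    rw [AddMonoidAlgebra.coe_algebraMap]
    rfl
  have hcond : ∀ x, φ x * φ x = algebraMap F A (Q x) := by
    intro x
    rw [hφapp, aux_tri]
    · rw [CliffordAlgebra.ι_sq_scalar, CliffordAlgebra.ι_mul_ι_add_swap, ← map_add, h5 x,
        halg]
    · rw [CliffordAlgebra.ι_sq_scalar, h1 x, map_zero]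
    · rw [CliffordAlgebra.ι_sq_scalar, h2 x, map_zero]
    · rw [CliffordAlgebra.ι_mul_ι_add_swap, h3 x, map_zero]
    · rw [CliffordAlgebra.ι_mul_ι_add_swap, h4 x, map_zero]
  set Φ : CliffordAlgebra Q →ₐ[F] A := CliffordAlgebra.lift Q ⟨φ, hcond⟩ with hΦdef
  have hΦι : ∀ x, Φ (CliffordAlgebra.ι Q x) = φ x := by
    intro x
    rw [hΦdef]
    exact CliffordAlgebra.lift_ι_apply φ hcond x
  -- the degree filtration on A
  set P : ℤ → Submodule F A := fun n =>
    { carrier := {g : A | ∀ d : ℤ, n < d → g.coeff d = 0}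
      add_mem' := by
        intro f g hf hg
        intro d hd
        show (f + g).coeff d = 0
        rw [AddMonoidAlgebra.coeff_add, Finsupp.add_apply, hf d hd, hg d hd, add_zero]
      zero_mem' := by
        intro d hd
        rfl
      smul_mem' := by
        intro r g hg
        intro d hd
        show (r • g).coeff d = 0
        rw [AddMonoidAlgebra.coeff_smul, Finsupp.smul_apply, hg d hd, smul_zero] } with hPdef
  have hPmem : ∀ (n : ℤ) (g : A), g ∈ P n ↔ ∀ d : ℤ, n < d → g.coeff d = 0 := fun n g => Iff.rfl
  have hPmono : ∀ {m n : ℤ}, m ≤ n → P m ≤ P n := by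
    intro m n hmn g hg d hd
    exact hg d (lt_of_le_of_lt hmn hd)
  have hPmul : ∀ {m n : ℤ} {f g : A}, f ∈ P m → g ∈ P n → f * g ∈ P (m + n) := by
    intro m n f g hf hg d hd
    by_contra hne
    have hd' : d ∈ (f * g).coeff.support := Finsupp.mem_support_iff.mpr hne
    have hsub := AddMonoidAlgebra.support_coeff_mul_subset f g hd'
    rw [Finset.mem_add] at hsub
    obtain ⟨e1, he1, e2, he2, hee⟩ := hsub
    have hle1 : e1 ≤ m := le_of_not_gt fun h => (Finsupp.mem_support_iff.mp he1) (hf _ h)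
    have hle2 : e2 ≤ n := le_of_not_gt fun h => (Finsupp.mem_support_iff.mp he2) (hg _ h)
    omega
  have hsingleP : ∀ {d n : ℤ} (x : CliffordAlgebra Qt), d ≤ n →
      (AddMonoidAlgebra.single d x : A) ∈ P n := by
    intro d n x hdn e he
    rw [AddMonoidAlgebra.coeff_single, Finsupp.single_apply, if_neg (by omega)]
  have h1P : (1 : A) ∈ P 0 := by
    rw [AddMonoidAlgebra.one_def]
    exact hsingleP _ le_rfl
  -- φ respects the filtrations
  have hφP : ∀ (α : ℤ) (x : V), x ∈ filtV Q U α → φ x ∈ P α := by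
    intro α x hx
    unfold filtV at hx
    split_ifs at hx with hlt hm1 h0
    · -- x = 0
      rw [Submodule.mem_bot] at hx
      subst hx
      rw [map_zero]
      exact (P α).zero_mem
    · -- x ∈ U
      subst hm1
      have hpCx : pC x = 0 := hpC_right x hx
      have hMx : Mm x = 0 := by rw [hMmdef]; simp [LinearMap.comp_apply, hpCx]
      rw [hφapp, hj0, hjp, hpCx, hMx]
      simp only [neg_zero, Prod.mk_zero_zero, map_zero, AddMonoidAlgebra.single_zero, add_zero]
      exact hsingleP _ le_rfl
    · -- x ∈ U^⊥
      subst h0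
      have hMx : Mm x = 0 := by
        apply LinearMap.ext
        intro w
        rw [hMm]
        have hxw : polar Q (pU w) x = 0 := hx (pU w) (hpUmem w)
        have hxw2 : polar Q (pU w) (pU x) = 0 := hUU _ (hpUmem w) _ (hpUmem x)
        have hpCx : pC x = x - pU x := by
          rw [eq_sub_iff_add_eq, add_comm]
          exact hsum x
        rw [hpCx]
        have : (polarBilin Q (pU w)) (x - pU x) = 0 := by
          rw [_root_.map_sub]
          simp only [polarBilin_apply_apply]
          rw [hxw, hxw2, sub_zero]
        simpa using this
      rw [hφapp, hjp, hMx]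
      simp only [Prod.mk_zero_zero, map_zero, AddMonoidAlgebra.single_zero, add_zero]
      exact (P 0).add_mem (hsingleP _ (by omega)) (hsingleP _ le_rfl)
    · -- everything
      have hge : 1 ≤ α := by omega
      rw [hφapp]
      refine (P α).add_mem ((P α).add_mem ?_ ?_) ?_
      · exact hsingleP _ (by omega)
      · exact hsingleP _ (by omega)
      · exact hsingleP _ (by omega)
  -- Φ respects the filtrations
  have hΦfilt : ∀ z ∈ filtC Q U k, Φ z ∈ P k := by
    intro z hz
    have hle : filtC Q U k ≤ Submodule.comap Φ.toLinearMap (P k) := by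
      rw [filtC]
      apply Submodule.span_le.mpr
      rintro z ⟨r, f, α, hmem, hsumle, rfl⟩
      have key : ∀ (r : ℕ) (f : Fin r → V) (α : Fin r → ℤ),
          (∀ i, f i ∈ filtV Q U (α i)) →
          Φ (List.ofFn fun i => CliffordAlgebra.ι Q (f i)).prod ∈ P (∑ i, α i) := by
        intro r
        induction r with
        | zero =>
          intro f α _
          simpa using h1P
        | succ n ih =>
          intro f α h
          rw [List.ofFn_succ, List.prod_cons, map_mul, Fin.sum_univ_succ]
          refine hPmul ?_ (ih (fun i => f i.succ) (fun i => α i.succ) fun i => h i.succ)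
          rw [hΦι]
          exact hφP _ _ (h 0)
      exact Submodule.mem_comap.mpr (hPmono hsumle (key r f α hmem))
    exact hle hz
  have hvP : ∀ d : ℤ, k < d → (φ v).coeff d = 0 := by
    have := hΦfilt _ hv
    rw [hΦι] at this
    exact this
  -- read off the coefficients
  have happm : (φ v).coeff (-1) = CliffordAlgebra.ι Qt (jm v) := by
    rw [hφapp]
    rw [AddMonoidAlgebra.coeff_add, AddMonoidAlgebra.coeff_add, AddMonoidAlgebra.coeff_single,
      AddMonoidAlgebra.coeff_single, AddMonoidAlgebra.coeff_single]
    rw [Finsupp.add_apply, Finsupp.add_apply, Finsupp.single_apply, Finsupp.single_apply,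
      Finsupp.single_apply]
    norm_num
  have happ0 : (φ v).coeff 0 = CliffordAlgebra.ι Qt (j0 v) := by
    rw [hφapp]
    rw [AddMonoidAlgebra.coeff_add, AddMonoidAlgebra.coeff_add, AddMonoidAlgebra.coeff_single,
      AddMonoidAlgebra.coeff_single, AddMonoidAlgebra.coeff_single]
    rw [Finsupp.add_apply, Finsupp.add_apply, Finsupp.single_apply, Finsupp.single_apply,
      Finsupp.single_apply]
    norm_num
  have happ1 : (φ v).coeff 1 = CliffordAlgebra.ι Qt (jp v) := by
    rw [hφapp]
    rw [AddMonoidAlgebra.coeff_add, AddMonoidAlgebra.coeff_add, AddMonoidAlgebra.coeff_single,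
      AddMonoidAlgebra.coeff_single, AddMonoidAlgebra.coeff_single]
    rw [Finsupp.add_apply, Finsupp.add_apply, Finsupp.single_apply, Finsupp.single_apply,
      Finsupp.single_apply]
    norm_num
  have hinj := aux_iota_injective Qt
  have hjmv : k < -1 → jm v = 0 := by
    intro h
    apply hinj
    rw [map_zero, ← happm]
    exact hvP (-1) h
  have hj0v : k < 0 → j0 v = 0 := by
    intro h
    apply hinj
    rw [map_zero, ← happ0]
    exact hvP 0 h
  have hjpv : k < 1 → jp v = 0 := by
    intro h
    apply hinj
    rw [map_zero, ← happ1]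
    exact hvP 1 h
  unfold filtV
  split_ifs with hlt hm1 h0
  · -- k < -1 : v = 0
    have ha := hjmv hlt
    have hb := hj0v (by omega)
    have hpUv : pU v = 0 := by
      have := congrArg Prod.fst ha
      simpa [hjm] using this
    have hpCv : pC v = 0 := by
      have := congrArg Prod.fst hb
      simpa [hj0] using this
    rw [Submodule.mem_bot, ← hsum v, hpUv, hpCv, add_zero]
  · -- k = -1 : v ∈ U
    have hb := hj0v (by omega)
    have hpCv : pC v = 0 := by
      have := congrArg Prod.fst hb
      simpa [hj0] using this
    have hveq : pU v = v := by
      conv_rhs => rw [← hsum v, hpCv, add_zero]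
    have hmem := hpUmem v
    rw [hveq] at hmem
    exact hmem
  · -- k = 0 : v ∈ U^⊥
    have hcgoal := hjpv (by omega)
    have hMv : Mm v = 0 := by
      have := congrArg Prod.snd hcgoal
      simpa [hjp] using this
    rw [LinearMap.BilinForm.mem_orthogonal_iff]
    intro u hu
    have e1 : polar Q u (pU v) = 0 := hUU u hu _ (hpUmem v)
    have e2 : polar Q u (pC v) = 0 := by
      calc polar Q u (pC v) = polar Q (pU u) (pC v) := by rw [hpU_left u hu]
        _ = Mm v u := (hMm v u).symm
        _ = 0 := by rw [hMv]; rfl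
    conv_lhs => rw [← hsum v]
    rw [map_add]
    simp only [polarBilin_apply_apply]
    rw [e1, e2, add_zero]
  · exact Submodule.mem_top

/-- For a totally isotropic subspace `U` of a finite-dimensional nondegenerate
quadratic space `(V,q)`, the filtration `W^U` on `Clif(V,q)` restricts on `ι(V)` to the
filtration `W^U` on `V`: `ι(V) ∩ W^U_k Clif(V) = ι(W^U_k V)` for every `k`.  In particular
`ι(V) ∩ W^U_{-1} Clif(V) = ι(U)` and `ι(V) ∩ W^U_0 Clif(V) = ι(U^⊥)`. -/
theorem statement4
    {F V : Type*} [Field F] [AddCommGroup V] [Module F V] [FiniteDimensional F V]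
    (Q : QuadraticForm F V)
    (hnd : (QuadraticMap.polarBilin Q).Nondegenerate)
    (U : Submodule F V) (hU : ∀ u ∈ U, Q u = 0) :
    (∀ k : ℤ,
      Set.range (CliffordAlgebra.ι Q) ∩ (filtC Q U k : Set (CliffordAlgebra Q))
        = CliffordAlgebra.ι Q '' (filtV Q U k : Set V)) ∧
    Set.range (CliffordAlgebra.ι Q) ∩ (filtC Q U (-1) : Set (CliffordAlgebra Q))
        = CliffordAlgebra.ι Q '' (U : Set V) ∧
    Set.range (CliffordAlgebra.ι Q) ∩ (filtC Q U 0 : Set (CliffordAlgebra Q))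
        = CliffordAlgebra.ι Q ''
            (LinearMap.BilinForm.orthogonal (QuadraticMap.polarBilin Q) U : Set V) := by
  have main : ∀ k : ℤ,
      Set.range (CliffordAlgebra.ι Q) ∩ (filtC Q U k : Set (CliffordAlgebra Q))
        = CliffordAlgebra.ι Q '' (filtV Q U k : Set V) := by
    intro k
    ext z
    constructor
    · rintro ⟨⟨w, rfl⟩, hzf⟩
      exact ⟨w, aux_key Q U hU k w hzf, rfl⟩
    · rintro ⟨w, hw, rfl⟩
      exact ⟨⟨w, rfl⟩, aux_rev Q U k w hw⟩
  refine ⟨main, ?_, ?_⟩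
  · rw [main (-1)]
    congr 1
  · rw [main 0]
    congr 1
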